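/- Let V = ⊕_{m ∈ Z^n} V_m be a Z^n-graded module over the commutative algebra A_n = C[t_1^{±1},...,t_n^{±1}] (with t^p V_m ⊆ V_{m+p}) that is irreducible as a graded module and uniformly bounded (there is N with dim V_m ≤ N for all m). Then dim V_m ≤ 1 for all m ∈ Z^n. -/

import Mathlib

/-- A ℤⁿ-graded module over the Laurent algebra `A_n = ℂ[t₁^{±1},…,t_n^{±1}]`
(modelled as `AddMonoidAlgebra ℂ (Fin n → ℤ)`) which is irreducible as a graded module
and uniformly bounded has all homogeneous components of dimension at most 1. -/
theorem stmt_15 (n : ℕ) (V : Type*) [AddCommGroup V] [Module ℂ V]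
    [Module (AddMonoidAlgebra ℂ (Fin n → ℤ)) V]
    [IsScalarTower ℂ (AddMonoidAlgebra ℂ (Fin n → ℤ)) V]
    [Nontrivial V]
    (Vm : (Fin n → ℤ) → Submodule ℂ V)
    (hdecomp : DirectSum.IsInternal Vm)
    (haction : ∀ p m : Fin n → ℤ, ∀ v ∈ Vm m,
      (AddMonoidAlgebra.single p (1 : ℂ)) • v ∈ Vm (m + p))
    (hirr : ∀ W : Submodule (AddMonoidAlgebra ℂ (Fin n → ℤ)) V,
      (W.restrictScalars ℂ = ⨆ m, (W.restrictScalars ℂ ⊓ Vm m)) → W = ⊥ ∨ W = ⊤)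
    (N : ℕ) (hbound : ∀ m, Module.rank ℂ (Vm m) ≤ N) :
    ∀ m, Module.rank ℂ (Vm m) ≤ 1 := by
  classical
  obtain ⟨m0, hm0⟩ : ∃ m0, Vm m0 ≠ ⊥ := by
    by_contra h
    push_neg at h
    have htop := hdecomp.submodule_iSup_eq_top
    have hbt : (⊥ : Submodule ℂ V) = ⊤ := by
      rw [← htop]
      exact le_antisymm bot_le (iSup_le fun m => (h m).le)
    exact absurd hbt bot_ne_top
  obtain ⟨v, hv, hv0⟩ := (Submodule.ne_bot_iff _).mp hm0
  set A := AddMonoidAlgebra ℂ (Fin n → ℤ)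
  set W : Submodule A V := Submodule.span A {v} with hWdef
  have hvW : v ∈ W := Submodule.mem_span_singleton_self v
  have hWr : W.restrictScalars ℂ =
      Submodule.span ℂ (Set.range fun p : Fin n → ℤ => (AddMonoidAlgebra.single p (1:ℂ)) • v) := by
    apply le_antisymm
    · intro x hx
      rw [Submodule.restrictScalars_mem, Submodule.mem_span_singleton] at hx
      obtain ⟨a, rfl⟩ := hx
      induction a using AddMonoidAlgebra.induction with
      | zero => simp
      | single_add p b f hpf hb ih =>
        rw [add_smul]
        refine Submodule.add_mem _ ?_ ih
        rw [show (AddMonoidAlgebra.single p b : A) = b • AddMonoidAlgebra.single p (1:ℂ) by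
          rw [AddMonoidAlgebra.smul_single', mul_one], smul_assoc]
        exact Submodule.smul_mem _ b (Submodule.subset_span ⟨p, rfl⟩)
    · rw [Submodule.span_le]
      rintro x ⟨p, rfl⟩
      exact W.smul_mem _ hvW
  have hgraded : W.restrictScalars ℂ = ⨆ m, (W.restrictScalars ℂ ⊓ Vm m) := by
    refine le_antisymm ?_ (iSup_le fun m => inf_le_left)
    nth_rewrite 1 [hWr]
    rw [Submodule.span_le]
    rintro x ⟨p, rfl⟩
    exact Submodule.mem_iSup_of_mem (m0 + p) ⟨W.smul_mem _ hvW, haction p m0 v hv⟩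
  have hWtop : W = ⊤ := by
    rcases hirr W hgraded with h | h
    · rw [h] at hvW
      exact absurd ((Submodule.mem_bot _).mp hvW) hv0
    · exact h
  intro m
  set S : Submodule ℂ V := Submodule.span ℂ {(AddMonoidAlgebra.single (m - m0) (1:ℂ)) • v} with hSdef
  have hS : S ≤ Vm m := by
    rw [Submodule.span_le, Set.singleton_subset_iff]
    have h := haction (m - m0) m0 v hv
    simpa using h
  set X : Submodule ℂ V := ⨆ (k) (_ : k ≠ m), Vm k with hXdef
  have hdisj : Disjoint (Vm m) X := hdecomp.submodule_iSupIndep m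
  have htop : (⊤ : Submodule ℂ V) ≤ S ⊔ X := by
    have h1 : (⊤ : Submodule A V).restrictScalars ℂ = ⊤ := rfl
    rw [← h1, ← hWtop, hWr, Submodule.span_le]
    rintro x ⟨p, rfl⟩
    by_cases hp : m0 + p = m
    · have hpe : p = m - m0 := by
        funext i
        have h2 := congrFun hp i
        simp only [Pi.add_apply, Pi.sub_apply] at h2 ⊢
        omega
      rw [hpe]
      exact (le_sup_left : S ≤ S ⊔ X) (Submodule.mem_span_singleton_self _)
    · have hx : Vm (m0 + p) ≤ X := le_iSup₂ (f := fun k (_ : k ≠ m) => Vm k) (m0 + p) hp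
      exact (le_sup_right : X ≤ S ⊔ X) (hx (haction p m0 v hv))
  have hXVm : X ⊓ Vm m = ⊥ := by rw [inf_comm]; exact disjoint_iff.mp hdisj
  have hle : Vm m ≤ S := by
    have h2 : Vm m ≤ (S ⊔ X) ⊓ Vm m := le_inf (le_trans le_top htop) le_rfl
    rwa [sup_inf_assoc_of_le _ hS, hXVm, sup_bot_eq] at h2
  calc Module.rank ℂ (Vm m) ≤ Module.rank ℂ S := Submodule.rank_mono hle
    _ ≤ 1 := by
      simpa using rank_span_le (R := ℂ) {(AddMonoidAlgebra.single (m - m0) (1:ℂ)) • v}
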